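/- Let X and Y be symmetric random variables with continuous densities f, g, E[X²] = E[Y²] = 1, such that f − g changes sign exactly 4 times, with f lower in the tails and in the center and higher in the intermediate regions (sign sequence of g − f: +,−,+,−,+ reading from −∞). Then X² ≤_cx Y² (equivalently X² ≤_icx Y²). Consequently, if fourth moments are finite, the kurtosis satisfies E[X⁴] ≤ E[Y⁴]. -/

import Mathlib

open MeasureTheory

/-- Convex order. -/
def LeCx {Ω : Type*} [MeasurableSpace Ω] (μ : Measure Ω) (X Y : Ω → ℝ) : Prop :=
  ∀ φ : ℝ → ℝ, ConvexOn ℝ Set.univ φ → Integrable (φ ∘ X) μ → Integrable (φ ∘ Y) μ →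
    ∫ ω, φ (X ω) ∂μ ≤ ∫ ω, φ (Y ω) ∂μ


lemma density_transfer {Ω : Type*} [MeasurableSpace Ω] (μ : Measure Ω) [IsProbabilityMeasure μ]
    {X : Ω → ℝ} (hX : Measurable X) {f : ℝ → ℝ} (hf : Continuous f) (hfnn : ∀ x, 0 ≤ f x)
    (hfd : Measure.map X μ = MeasureTheory.volume.withDensity (fun x => ENNReal.ofReal (f x)))
    {u : ℝ → ℝ} (hu : Continuous u) :
    (Integrable (fun ω => u (X ω)) μ ↔ Integrable (fun x => u x * f x) volume) ∧
      ∫ ω, u (X ω) ∂μ = ∫ x, u x * f x := by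
  have hmeas : Measurable fun x => ENNReal.ofReal (f x) := hf.measurable.ennreal_ofReal
  constructor
  · rw [show Integrable (fun ω => u (X ω)) μ ↔ Integrable (fun x => u x) (Measure.map X μ) from
      (integrable_map_measure hu.aestronglyMeasurable hX.aemeasurable).symm, hfd,
      integrable_withDensity_iff hmeas (Filter.Eventually.of_forall fun x => ENNReal.ofReal_lt_top)]
    exact integrable_congr (Filter.Eventually.of_forall fun x => by
      simp [ENNReal.toReal_ofReal (hfnn x)])
  · rw [← integral_map hX.aemeasurable hu.aestronglyMeasurable, hfd]
    rw [show (fun x => ENNReal.ofReal (f x)) = (fun x => ((Real.toNNReal (f x) : NNReal) : ENNReal)) from rfl]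
    rw [integral_withDensity_eq_integral_smul hf.measurable.real_toNNReal u]
    congr 1; funext x
    simp [NNReal.smul_def, Real.coe_toNNReal _ (hfnn x), mul_comm]

lemma main_ineq {Ω : Type*} [MeasurableSpace Ω] (μ : Measure Ω) [IsProbabilityMeasure μ]
    (X Y : Ω → ℝ) (hX : Measurable X) (hY : Measurable Y)
    (f g : ℝ → ℝ) (hfc : Continuous f) (hgc : Continuous g)
    (hfd : Measure.map X μ = MeasureTheory.volume.withDensity (fun x => ENNReal.ofReal (f x)))
    (hgd : Measure.map Y μ = MeasureTheory.volume.withDensity (fun x => ENNReal.ofReal (g x)))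
    (hfnn : ∀ x, 0 ≤ f x) (hgnn : ∀ x, 0 ≤ g x)
    (hX2int : Integrable (fun ω => (X ω) ^ 2) μ)
    (hY2int : Integrable (fun ω => (Y ω) ^ 2) μ)
    (hX2 : ∫ ω, (X ω) ^ 2 ∂μ = 1) (hY2 : ∫ ω, (Y ω) ^ 2 ∂μ = 1)
    (a b : ℝ) (ha : 0 < a) (hab : a < b)
    (hcenter : ∀ x, |x| < a → f x ≤ g x)
    (hmid : ∀ x, a < |x| → |x| < b → g x ≤ f x)
    (htail : ∀ x, b < |x| → f x ≤ g x)
    (φ : ℝ → ℝ) (hφ : ConvexOn ℝ Set.univ φ)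
    (hφX : Integrable (fun ω => φ ((X ω) ^ 2)) μ)
    (hφY : Integrable (fun ω => φ ((Y ω) ^ 2)) μ) :
    ∫ ω, φ ((X ω) ^ 2) ∂μ ≤ ∫ ω, φ ((Y ω) ^ 2) ∂μ := by
  have hφcont : Continuous φ := by
    have := hφ.continuousOn isOpen_univ
    rwa [continuousOn_univ] at this
  set p : ℝ := a ^ 2 with hp
  set q : ℝ := b ^ 2 with hq
  have hpq : p < q := by
    rw [hp, hq]; nlinarith
  have hqp : (0:ℝ) < q - p := sub_pos.mpr hpq
  set m : ℝ := (φ q - φ p) / (q - p) with hm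
  have hmq : m * (q - p) = φ q - φ p := by
    rw [hm]; field_simp
  have hline : ∀ t : ℝ, φ p + m * (t - p) = ((q - t) * φ p + (t - p) * φ q) / (q - p) := by
    intro t; rw [hm]; field_simp; ring
  have h_in : ∀ t, p ≤ t → t ≤ q → φ t ≤ φ p + m * (t - p) := by
    intro t h1 h2
    rcases eq_or_lt_of_le h1 with rfl | h1
    · simp
    rcases eq_or_lt_of_le h2 with rfl | h2
    · linarith [hmq]
    have key := hφ.secant_mono_aux1 (Set.mem_univ p) (Set.mem_univ q) h1 h2
    rw [hline, le_div_iff₀ hqp]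
    linarith [key]
  have h_outL : ∀ t, t ≤ p → φ p + m * (t - p) ≤ φ t := by
    intro t h1
    rcases eq_or_lt_of_le h1 with rfl | h1
    · simp
    have key := hφ.secant_mono_aux1 (Set.mem_univ t) (Set.mem_univ q) h1 hpq
    rw [hline, div_le_iff₀ hqp]
    linarith [key]
  have h_outR : ∀ t, q ≤ t → φ p + m * (t - p) ≤ φ t := by
    intro t h1
    rcases eq_or_lt_of_le h1 with rfl | h1
    · linarith [hmq]
    have key := hφ.secant_mono_aux1 (Set.mem_univ p) (Set.mem_univ t) hpq h1
    rw [hline, div_le_iff₀ hqp]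
    linarith [key]
  set u : ℝ → ℝ := fun x => φ (x ^ 2) - (φ p + m * (x ^ 2 - p)) with hu_def
  have hpt : ∀ x, u x * f x ≤ u x * g x := by
    intro x
    rcases lt_trichotomy |x| a with h | h | h
    · have hx2 : x ^ 2 ≤ p := by
        rw [hp, ← sq_abs x]
        exact (pow_le_pow_left₀ (abs_nonneg x) h.le 2)
      have hu0 : 0 ≤ u x := by
        have := h_outL (x ^ 2) hx2
        simp only [hu_def]; linarith
      exact mul_le_mul_of_nonneg_left (hcenter x h) hu0
    · have hx2 : x ^ 2 = p := by rw [hp, ← sq_abs x, h]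
      simp [hu_def, hx2]
    · rcases lt_trichotomy |x| b with h' | h' | h'
      · have hx2l : p ≤ x ^ 2 := by
          rw [hp, ← sq_abs x]
          exact pow_le_pow_left₀ ha.le h.le 2
        have hx2r : x ^ 2 ≤ q := by
          rw [hq, ← sq_abs x]
          exact pow_le_pow_left₀ (abs_nonneg x) h'.le 2
        have hu0 : u x ≤ 0 := by
          have := h_in (x ^ 2) hx2l hx2r
          simp only [hu_def]; linarith
        exact mul_le_mul_of_nonpos_left (hmid x h h') hu0
      · have hx2 : x ^ 2 = q := by rw [hq, ← sq_abs x, h']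
        have hu0 : u x = 0 := by simp only [hu_def, hx2]; linarith [hmq]
        rw [hu0]; simp
      · have hx2 : q ≤ x ^ 2 := by
          rw [hq, ← sq_abs x]
          exact pow_le_pow_left₀ (ha.trans hab).le h'.le 2
        have hu0 : 0 ≤ u x := by
          have := h_outR (x ^ 2) hx2
          simp only [hu_def]; linarith
        exact mul_le_mul_of_nonneg_left (htail x h') hu0
  -- continuity facts
  have c1 : Continuous (fun _ : ℝ => (1:ℝ)) := continuous_const
  have c2 : Continuous (fun x : ℝ => x ^ 2) := continuous_pow 2
  have cφ : Continuous (fun x : ℝ => φ (x ^ 2)) := hφcont.comp c2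
  -- f side
  obtain ⟨if1, ef1⟩ := density_transfer μ hX hfc hfnn hfd c1
  obtain ⟨if2, ef2⟩ := density_transfer μ hX hfc hfnn hfd c2
  obtain ⟨ifφ, efφ⟩ := density_transfer μ hX hfc hfnn hfd cφ
  obtain ⟨ig1, eg1⟩ := density_transfer μ hY hgc hgnn hgd c1
  obtain ⟨ig2, eg2⟩ := density_transfer μ hY hgc hgnn hgd c2
  obtain ⟨igφ, egφ⟩ := density_transfer μ hY hgc hgnn hgd cφ
  have intf1 : Integrable (fun x => 1 * f x) volume := if1.mp (integrable_const 1)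
  have intf2 : Integrable (fun x => x ^ 2 * f x) volume := if2.mp hX2int
  have intfφ : Integrable (fun x => φ (x ^ 2) * f x) volume := ifφ.mp hφX
  have intg1 : Integrable (fun x => 1 * g x) volume := ig1.mp (integrable_const 1)
  have intg2 : Integrable (fun x => x ^ 2 * g x) volume := ig2.mp hY2int
  have intgφ : Integrable (fun x => φ (x ^ 2) * g x) volume := igφ.mp hφY
  have hf1val : ∫ x, 1 * f x = 1 := by
    rw [← ef1]; simp
  have hf2val : ∫ x, x ^ 2 * f x = 1 := by rw [← ef2]; exact hX2
  have hg1val : ∫ x, 1 * g x = 1 := by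
    rw [← eg1]; simp
  have hg2val : ∫ x, x ^ 2 * g x = 1 := by rw [← eg2]; exact hY2
  have edecomp : ∀ x : ℝ, ∀ h : ℝ,
      φ (x ^ 2) * h = u x * h + ((φ p - m * p) * (1 * h) + m * (x ^ 2 * h)) := by
    intro x h; simp only [hu_def]; ring
  have intuf : Integrable (fun x => u x * f x) volume := by
    have e : (fun x => u x * f x)
        = fun x => φ (x ^ 2) * f x - ((φ p - m * p) * (1 * f x) + m * (x ^ 2 * f x)) := by
      funext x; have := edecomp x (f x); linarith
    rw [e]
    exact intfφ.sub ((intf1.const_mul (φ p - m * p)).add (intf2.const_mul m))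
  have intug : Integrable (fun x => u x * g x) volume := by
    have e : (fun x => u x * g x)
        = fun x => φ (x ^ 2) * g x - ((φ p - m * p) * (1 * g x) + m * (x ^ 2 * g x)) := by
      funext x; have := edecomp x (g x); linarith
    rw [e]
    exact intgφ.sub ((intg1.const_mul (φ p - m * p)).add (intg2.const_mul m))
  have splitf : ∫ x, φ (x ^ 2) * f x = (∫ x, u x * f x) + ((φ p - m * p) + m) := by
    have e : (fun x => φ (x ^ 2) * f x)
        = fun x => u x * f x + ((φ p - m * p) * (1 * f x) + m * (x ^ 2 * f x)) := by
      funext x; exact edecomp x (f x)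
    have h1 : (∫ x, (u x * f x + ((φ p - m * p) * (1 * f x) + m * (x ^ 2 * f x))))
        = (∫ x, u x * f x) + ∫ x, ((φ p - m * p) * (1 * f x) + m * (x ^ 2 * f x)) :=
      integral_add intuf ((intf1.const_mul (φ p - m * p)).add (intf2.const_mul m))
    have h2 : (∫ x, ((φ p - m * p) * (1 * f x) + m * (x ^ 2 * f x)))
        = (∫ x, (φ p - m * p) * (1 * f x)) + ∫ x, m * (x ^ 2 * f x) :=
      integral_add (intf1.const_mul (φ p - m * p)) (intf2.const_mul m)
    have h3 : (∫ x, (φ p - m * p) * (1 * f x)) = (φ p - m * p) * ∫ x, 1 * f x :=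
      integral_const_mul _ _
    have h4 : (∫ x, m * (x ^ 2 * f x)) = m * ∫ x, x ^ 2 * f x :=
      integral_const_mul _ _
    rw [e, h1, h2, h3, h4, hf1val, hf2val]
    ring
  have splitg : ∫ x, φ (x ^ 2) * g x = (∫ x, u x * g x) + ((φ p - m * p) + m) := by
    have e : (fun x => φ (x ^ 2) * g x)
        = fun x => u x * g x + ((φ p - m * p) * (1 * g x) + m * (x ^ 2 * g x)) := by
      funext x; exact edecomp x (g x)
    have h1 : (∫ x, (u x * g x + ((φ p - m * p) * (1 * g x) + m * (x ^ 2 * g x))))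
        = (∫ x, u x * g x) + ∫ x, ((φ p - m * p) * (1 * g x) + m * (x ^ 2 * g x)) :=
      integral_add intug ((intg1.const_mul (φ p - m * p)).add (intg2.const_mul m))
    have h2 : (∫ x, ((φ p - m * p) * (1 * g x) + m * (x ^ 2 * g x)))
        = (∫ x, (φ p - m * p) * (1 * g x)) + ∫ x, m * (x ^ 2 * g x) :=
      integral_add (intg1.const_mul (φ p - m * p)) (intg2.const_mul m)
    have h3 : (∫ x, (φ p - m * p) * (1 * g x)) = (φ p - m * p) * ∫ x, 1 * g x :=
      integral_const_mul _ _
    have h4 : (∫ x, m * (x ^ 2 * g x)) = m * ∫ x, x ^ 2 * g x :=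
      integral_const_mul _ _
    rw [e, h1, h2, h3, h4, hg1val, hg2val]
    ring
  calc ∫ ω, φ ((X ω) ^ 2) ∂μ = ∫ x, φ (x ^ 2) * f x := efφ
    _ = (∫ x, u x * f x) + ((φ p - m * p) + m) := splitf
    _ ≤ (∫ x, u x * g x) + ((φ p - m * p) + m) := by
        exact add_le_add_left (integral_mono intuf intug hpt) _
    _ = ∫ x, φ (x ^ 2) * g x := splitg.symm
    _ = ∫ ω, φ ((Y ω) ^ 2) ∂μ := egφ.symm

/-- let `X`, `Y` be symmetric with continuous densities `f`, `g` and
`E[X²] = E[Y²] = 1`.  If `g - f` has sign sequence `+,-,+,-,+` (reading from `-∞`), i.e.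
there are symmetric crossing points `±a`, `±b` with `0 < a < b` such that `f ≤ g` in the
center `|x| < a` and in the tails `|x| > b`, and `g ≤ f` in the intermediate regions
`a < |x| < b`, then `X² ≤_cx Y²`; consequently, whenever fourth moments are finite,
`E[X⁴] ≤ E[Y⁴]` (comparison of Pearson's kurtosis). -/
theorem stmt9 {Ω : Type*} [MeasurableSpace Ω] (μ : Measure Ω) [IsProbabilityMeasure μ]
    (X Y : Ω → ℝ) (hX : Measurable X) (hY : Measurable Y)
    (f g : ℝ → ℝ) (hfc : Continuous f) (hgc : Continuous g)
    (hfd : Measure.map X μ = MeasureTheory.volume.withDensity (fun x => ENNReal.ofReal (f x)))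
    (hgd : Measure.map Y μ = MeasureTheory.volume.withDensity (fun x => ENNReal.ofReal (g x)))
    (hfsym : ∀ x, f (-x) = f x) (hgsym : ∀ x, g (-x) = g x)
    (hfnn : ∀ x, 0 ≤ f x) (hgnn : ∀ x, 0 ≤ g x)
    (hX2int : Integrable (fun ω => (X ω) ^ 2) μ)
    (hY2int : Integrable (fun ω => (Y ω) ^ 2) μ)
    (hX2 : ∫ ω, (X ω) ^ 2 ∂μ = 1) (hY2 : ∫ ω, (Y ω) ^ 2 ∂μ = 1)
    (a b : ℝ) (ha : 0 < a) (hab : a < b)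
    (hcenter : ∀ x, |x| < a → f x ≤ g x)
    (hmid : ∀ x, a < |x| → |x| < b → g x ≤ f x)
    (htail : ∀ x, b < |x| → f x ≤ g x) :
    LeCx μ (fun ω => (X ω) ^ 2) (fun ω => (Y ω) ^ 2) ∧
      (Integrable (fun ω => (X ω) ^ 4) μ → Integrable (fun ω => (Y ω) ^ 4) μ →
        ∫ ω, (X ω) ^ 4 ∂μ ≤ ∫ ω, (Y ω) ^ 4 ∂μ) := by
  constructor
  · intro φ hφ h1 h2
    exact main_ineq μ X Y hX hY f g hfc hgc hfd hgd hfnn hgnn hX2int hY2int hX2 hY2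
      a b ha hab hcenter hmid htail φ hφ h1 h2
  · intro h4X h4Y
    have eX : (fun ω => ((X ω) ^ 2) ^ 2) = fun ω => (X ω) ^ 4 := by funext ω; ring
    have eY : (fun ω => ((Y ω) ^ 2) ^ 2) = fun ω => (Y ω) ^ 4 := by funext ω; ring
    have := main_ineq μ X Y hX hY f g hfc hgc hfd hgd hfnn hgnn hX2int hY2int hX2 hY2
      a b ha hab hcenter hmid htail (fun t => t ^ 2) (Even.convexOn_pow even_two)
      (by rw [show (fun ω => ((X ω) ^ 2) ^ 2) = fun ω => (X ω) ^ 4 from eX]; exact h4X)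
      (by rw [show (fun ω => ((Y ω) ^ 2) ^ 2) = fun ω => (Y ω) ^ 4 from eY]; exact h4Y)
    calc ∫ ω, (X ω) ^ 4 ∂μ = ∫ ω, ((X ω) ^ 2) ^ 2 ∂μ := by rw [eX]
      _ ≤ ∫ ω, ((Y ω) ^ 2) ^ 2 ∂μ := this
      _ = ∫ ω, (Y ω) ^ 4 ∂μ := by rw [eY]
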